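/- The invariant factors (g₁, g₂, g₃) of the integer matrix [[2b, c, a],[c, 2d, 0],[a, 0, 0]] (a ∈ Z_{>0}, b,c,d ∈ Z, d > 0) are g₁ = gcd(a, 2b, c, 2d), g₂ = gcd(a², ac, 2ad, 4bd − c²)/g₁, and g₃ = 2a²d/(g₁·g₂); in particular g₁g₂g₃ = |det| = 2a²d. Hence the discriminant group of the corresponding lattice is Z/g₁ ⊕ Z/g₂ ⊕ Z/g₃. -/

import Mathlib

open Matrix

/-- Any 3×3 integer matrix with nonzero determinant is unimodularly equivalent
to a diagonal matrix. -/
theorem exists_diag (M : Matrix (Fin 3) (Fin 3) ℤ) (hdet : M.det ≠ 0) :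
    ∃ (P Q : Matrix (Fin 3) (Fin 3) ℤ) (s : Fin 3 → ℤ), IsUnit P.det ∧ IsUnit Q.det ∧
      P * M * Q = Matrix.diagonal s := by
  classical
  set f := Matrix.toLin' M with hf
  have hinj : Function.Injective f := by
    rw [← LinearMap.ker_eq_bot]
    by_contra h
    obtain ⟨v, hv, hv0⟩ := Submodule.exists_mem_ne_zero_of_ne_bot h
    exact hdet ((Matrix.exists_mulVec_eq_zero_iff).mp ⟨v, hv0, hv⟩)
  set N := LinearMap.range f with hN
  obtain ⟨n, snf⟩ := N.smithNormalForm (Pi.basisFun ℤ (Fin 3))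
  -- N ≃ ℤ³, so n = 3
  let e0 : (Fin 3 → ℤ) ≃ₗ[ℤ] N := LinearEquiv.ofInjective f hinj
  have hn : n = 3 := by
    have := Module.Basis.indexEquiv (snf.bN.map e0.symm) (Pi.basisFun ℤ (Fin 3))
    simpa using Fintype.card_congr this
  subst hn
  have hfbij : Function.Bijective snf.f :=
    (Finite.injective_iff_bijective).mp snf.f.injective
  let e : Fin 3 ≃ Fin 3 := Equiv.ofBijective snf.f hfbij
  -- codomain basis c with c i = snf.bM (snf.f i)
  let cc : Module.Basis (Fin 3) ℤ (Fin 3 → ℤ) := snf.bM.reindex e.symm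
  have hcc : ∀ i, cc i = snf.bM (snf.f i) := by
    intro i; simp [cc, e, Equiv.ofBijective]
  -- domain basis
  let cB : Module.Basis (Fin 3) ℤ (Fin 3 → ℤ) := snf.bN.map e0.symm
  have hkey : ∀ i, f (cB i) = snf.a i • cc i := by
    intro i
    have : f (cB i) = (snf.bN i : Fin 3 → ℤ) := by
      simp only [cB, Module.Basis.map_apply]
      rw [show f (e0.symm (snf.bN i)) = ((e0 (e0.symm (snf.bN i)) : N) : Fin 3 → ℤ) from
        (LinearEquiv.ofInjective_apply f _).symm, e0.apply_symm_apply]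
    rw [this, snf.snf i, hcc]
  -- matrix of f wrt cB, cc is diagonal
  have hdiag : LinearMap.toMatrix cB cc f = Matrix.diagonal snf.a := by
    ext i j
    rw [LinearMap.toMatrix_apply, hkey, _root_.map_smul, Module.Basis.repr_self]
    simp only [Matrix.diagonal, Finsupp.smul_apply, Finsupp.single_apply, smul_eq_mul, of_apply]
    by_cases h : i = j
    · subst h; simp
    · simp [h, Ne.symm h]
  -- decompose into change of basis
  let std := Pi.basisFun ℤ (Fin 3)
  refine ⟨LinearMap.toMatrix std cc LinearMap.id,
          LinearMap.toMatrix cB std LinearMap.id, snf.a, ?_, ?_, ?_⟩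
  · apply isUnit_of_mul_isUnit_left (y := (LinearMap.toMatrix cc std LinearMap.id).det)
    rw [← Matrix.det_mul, ← LinearMap.toMatrix_comp cc std cc, LinearMap.id_comp,
      LinearMap.toMatrix_id, Matrix.det_one]
    exact isUnit_one
  · apply isUnit_of_mul_isUnit_left (y := (LinearMap.toMatrix std cB LinearMap.id).det)
    rw [← Matrix.det_mul, ← LinearMap.toMatrix_comp std cB std, LinearMap.id_comp,
      LinearMap.toMatrix_id, Matrix.det_one]
    exact isUnit_one
  · have hM : LinearMap.toMatrix std std f = M := by
      rw [show (std : Module.Basis (Fin 3) ℤ (Fin 3 → ℤ)) = Pi.basisFun ℤ (Fin 3) from rfl,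
        LinearMap.toMatrix_eq_toMatrix', hf, LinearMap.toMatrix'_toLin']
    rw [← hM]
    calc LinearMap.toMatrix std cc LinearMap.id * LinearMap.toMatrix std std f
            * LinearMap.toMatrix cB std LinearMap.id
        = LinearMap.toMatrix std cc LinearMap.id *
            (LinearMap.toMatrix std std f * LinearMap.toMatrix cB std LinearMap.id) := by
          rw [Matrix.mul_assoc]
      _ = LinearMap.toMatrix std cc LinearMap.id * LinearMap.toMatrix cB std (f.comp LinearMap.id) := by
          rw [LinearMap.toMatrix_comp cB std std]
      _ = LinearMap.toMatrix cB cc (LinearMap.id.comp (f.comp LinearMap.id)) := by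
          rw [LinearMap.toMatrix_comp cB std cc]
      _ = Matrix.diagonal snf.a := by rw [LinearMap.id_comp, LinearMap.comp_id, hdiag]

open Matrix

lemma diag3 (x y z : ℤ) : Matrix.diagonal ![x,y,z] = !![x,0,0;0,y,0;0,0,z] := by
  ext i j
  fin_cases i <;> fin_cases j <;>
    simp [Matrix.diagonal, Matrix.vecHead, Matrix.vecTail]

lemma pair_core01 (g x' y' u v z : ℤ) (h1 : u*x' + v*y' = 1) :
    ∃ P Q : Matrix (Fin 3) (Fin 3) ℤ, IsUnit P.det ∧ IsUnit Q.det ∧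
      P * Matrix.diagonal ![g*x', g*y', z] * Q = Matrix.diagonal ![g, g*(x'*y'), z] := by
  refine ⟨!![u, v, 0; -y', x', 0; 0, 0, 1], !![1, -(v*y'), 0; 1, u*x', 0; 0, 0, 1], ?_, ?_, ?_⟩
  · rw [show (!![u, v, 0; -y', x', 0; 0, 0, 1] : Matrix (Fin 3) (Fin 3) ℤ).det = u*x' + v*y' by
      rw [Matrix.det_fin_three]; norm_num [Matrix.vecHead, Matrix.vecTail, Matrix.cons_val_two], h1]
    exact isUnit_one
  · rw [show (!![1, -(v*y'), 0; 1, u*x', 0; 0, 0, 1] : Matrix (Fin 3) (Fin 3) ℤ).det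
        = u*x' + v*y' by
      rw [Matrix.det_fin_three]; norm_num [Matrix.vecHead, Matrix.vecTail, Matrix.cons_val_two], h1]
    exact isUnit_one
  · rw [diag3, diag3]
    ext i j
    fin_cases i <;> fin_cases j <;>
      simp [Matrix.mul_apply, Fin.sum_univ_three, Matrix.vecHead, Matrix.vecTail] <;>
      (first | ring1 | linear_combination g * h1 | linear_combination (g*x'*y') * h1)

lemma pair_core12 (g x' y' u v w : ℤ) (h1 : u*x' + v*y' = 1) :
    ∃ P Q : Matrix (Fin 3) (Fin 3) ℤ, IsUnit P.det ∧ IsUnit Q.det ∧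
      P * Matrix.diagonal ![w, g*x', g*y'] * Q = Matrix.diagonal ![w, g, g*(x'*y')] := by
  refine ⟨!![1, 0, 0; 0, u, v; 0, -y', x'], !![1, 0, 0; 0, 1, -(v*y'); 0, 1, u*x'], ?_, ?_, ?_⟩
  · rw [show (!![1, 0, 0; 0, u, v; 0, -y', x'] : Matrix (Fin 3) (Fin 3) ℤ).det = u*x' + v*y' by
      rw [Matrix.det_fin_three]; norm_num [Matrix.vecHead, Matrix.vecTail, Matrix.cons_val_two], h1]
    exact isUnit_one
  · rw [show (!![1, 0, 0; 0, 1, -(v*y'); 0, 1, u*x'] : Matrix (Fin 3) (Fin 3) ℤ).det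
        = u*x' + v*y' by
      rw [Matrix.det_fin_three]; norm_num [Matrix.vecHead, Matrix.vecTail, Matrix.cons_val_two], h1]
    exact isUnit_one
  · rw [diag3, diag3]
    ext i j
    fin_cases i <;> fin_cases j <;>
      simp [Matrix.mul_apply, Fin.sum_univ_three, Matrix.vecHead, Matrix.vecTail] <;>
      (first | ring1 | linear_combination g * h1 | linear_combination (g*x'*y') * h1)

lemma swap12 (x y z : ℤ) :
    ∃ P Q : Matrix (Fin 3) (Fin 3) ℤ, IsUnit P.det ∧ IsUnit Q.det ∧
      P * Matrix.diagonal ![x, y, z] * Q = Matrix.diagonal ![x, z, y] := by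
  refine ⟨!![1,0,0;0,0,1;0,1,0], !![1,0,0;0,0,1;0,1,0], ?_, ?_, ?_⟩
  · rw [show (!![1,0,0;0,0,1;0,1,0] : Matrix (Fin 3) (Fin 3) ℤ).det = -1 by
      rw [Matrix.det_fin_three]; norm_num [Matrix.vecHead, Matrix.vecTail, Matrix.cons_val_two]]
    exact isUnit_one.neg
  · rw [show (!![1,0,0;0,0,1;0,1,0] : Matrix (Fin 3) (Fin 3) ℤ).det = -1 by
      rw [Matrix.det_fin_three]; norm_num [Matrix.vecHead, Matrix.vecTail, Matrix.cons_val_two]]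
    exact isUnit_one.neg
  · rw [diag3, diag3]
    ext i j
    fin_cases i <;> fin_cases j <;>
      simp [Matrix.mul_apply, Fin.sum_univ_three, Matrix.vecHead, Matrix.vecTail]

lemma pair01' (x y z : ℤ) (hx : x ≠ 0) :
    ∃ (P Q : Matrix (Fin 3) (Fin 3) ℤ) (m : ℤ), IsUnit P.det ∧ IsUnit Q.det ∧
      P * Matrix.diagonal ![x,y,z] * Q = Matrix.diagonal ![(Int.gcd x y : ℤ), m, z] ∧
      (Int.gcd x y : ℤ) * m = x * y ∧ (Int.gcd x y : ℤ) ∣ m := by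
  set g : ℤ := (Int.gcd x y : ℤ) with hgdef
  have hg : g ≠ 0 := by
    have h0 : Int.gcd x y ≠ 0 := fun h => hx (Int.gcd_eq_zero_iff.mp h).1
    rw [hgdef]
    exact_mod_cast h0
  obtain ⟨x', hx'⟩ : g ∣ x := (Int.gcd_dvd_left _ _)
  obtain ⟨y', hy'⟩ : g ∣ y := (Int.gcd_dvd_right _ _)
  have hbez : g = x * Int.gcdA x y + y * Int.gcdB x y := Int.gcd_eq_gcd_ab x y
  have h1 : Int.gcdA x y * x' + Int.gcdB x y * y' = 1 := by
    apply mul_left_cancel₀ hg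
    rw [mul_one]
    linear_combination -hbez - Int.gcdA x y * hx' - Int.gcdB x y * hy'
  obtain ⟨P, Q, hP, hQ, hPQ⟩ := pair_core01 g x' y' (Int.gcdA x y) (Int.gcdB x y) z h1
  refine ⟨P, Q, g*(x'*y'), hP, hQ, ?_, by rw [hx', hy']; ring, ⟨x'*y', rfl⟩⟩
  rw [hx', hy']
  exact hPQ

lemma pair12' (w x y : ℤ) (hx : x ≠ 0) :
    ∃ (P Q : Matrix (Fin 3) (Fin 3) ℤ) (m : ℤ), IsUnit P.det ∧ IsUnit Q.det ∧
      P * Matrix.diagonal ![w,x,y] * Q = Matrix.diagonal ![w, (Int.gcd x y : ℤ), m] ∧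
      (Int.gcd x y : ℤ) * m = x * y ∧ (Int.gcd x y : ℤ) ∣ m := by
  set g : ℤ := (Int.gcd x y : ℤ) with hgdef
  have hg : g ≠ 0 := by
    have h0 : Int.gcd x y ≠ 0 := fun h => hx (Int.gcd_eq_zero_iff.mp h).1
    rw [hgdef]
    exact_mod_cast h0
  obtain ⟨x', hx'⟩ : g ∣ x := (Int.gcd_dvd_left _ _)
  obtain ⟨y', hy'⟩ : g ∣ y := (Int.gcd_dvd_right _ _)
  have hbez : g = x * Int.gcdA x y + y * Int.gcdB x y := Int.gcd_eq_gcd_ab x y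
  have h1 : Int.gcdA x y * x' + Int.gcdB x y * y' = 1 := by
    apply mul_left_cancel₀ hg
    rw [mul_one]
    linear_combination -hbez - Int.gcdA x y * hx' - Int.gcdB x y * hy'
  obtain ⟨P, Q, hP, hQ, hPQ⟩ := pair_core12 g x' y' (Int.gcdA x y) (Int.gcdB x y) w h1
  refine ⟨P, Q, g*(x'*y'), hP, hQ, ?_, by rw [hx', hy']; ring, ⟨x'*y', rfl⟩⟩
  rw [hx', hy']
  exact hPQ

lemma comp_step {A B C P1 Q1 P2 Q2 : Matrix (Fin 3) (Fin 3) ℤ}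
    (h1 : P1 * A * Q1 = B) (h2 : P2 * B * Q2 = C) :
    (P2 * P1) * A * (Q1 * Q2) = C := by
  rw [← h2, ← h1]
  simp only [Matrix.mul_assoc]

lemma exists_chain (x y z : ℤ) (hx : x ≠ 0) (hy : y ≠ 0) (hz : z ≠ 0) :
    ∃ (P Q : Matrix (Fin 3) (Fin 3) ℤ) (t : Fin 3 → ℤ), IsUnit P.det ∧ IsUnit Q.det ∧
      P * Matrix.diagonal ![x,y,z] * Q = Matrix.diagonal t ∧ t 0 ∣ t 1 ∧ t 1 ∣ t 2 := by
  obtain ⟨P1,Q1,m1,hP1,hQ1,hE1,hm1,hd1⟩ := pair01' x y z hx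
  set g1 : ℤ := (Int.gcd x y : ℤ) with hg1def
  have hg1 : g1 ≠ 0 := by
    have h0 : Int.gcd x y ≠ 0 := fun h => hx (Int.gcd_eq_zero_iff.mp h).1
    rw [hg1def]
    exact_mod_cast h0
  have hm1ne : m1 ≠ 0 := by
    intro h; rw [h, mul_zero] at hm1; exact mul_ne_zero hx hy hm1.symm
  obtain ⟨P2,Q2,hP2,hQ2,hE2⟩ := swap12 g1 m1 z
  obtain ⟨P3,Q3,m2,hP3,hQ3,hE3,hm2,hd2⟩ := pair01' g1 z m1 hg1
  set g2 : ℤ := (Int.gcd g1 z : ℤ) with hg2def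
  have hm2ne : m2 ≠ 0 := by
    intro h; rw [h, mul_zero] at hm2; exact mul_ne_zero hg1 hz hm2.symm
  obtain ⟨P4,Q4,m3,hP4,hQ4,hE4,hm3,hd3⟩ := pair12' g2 m2 m1 hm2ne
  refine ⟨P4*(P3*(P2*P1)), Q1*(Q2*(Q3*Q4)), ![g2, (Int.gcd m2 m1 : ℤ), m3], ?_, ?_, ?_, ?_, ?_⟩
  · simp only [Matrix.det_mul]; exact (hP4.mul (hP3.mul (hP2.mul hP1)))
  · simp only [Matrix.det_mul]; exact (hQ1.mul (hQ2.mul (hQ3.mul hQ4)))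
  · have s1 := comp_step hE1 hE2
    have s2 := comp_step s1 hE3
    have s3 := comp_step s2 hE4
    rw [← s3]
    simp only [Matrix.mul_assoc]
  · -- g2 ∣ gcd m2 m1
    simp only [Matrix.cons_val_zero, Matrix.cons_val_one, Matrix.head_cons]
    exact Int.dvd_coe_gcd hd2 (dvd_trans (Int.gcd_dvd_left _ _) hd1)
  · simp only [Matrix.cons_val_one, Matrix.head_cons]
    show (Int.gcd m2 m1 : ℤ) ∣ ![g2, (Int.gcd m2 m1 : ℤ), m3] 2
    exact hd3

lemma dvd_entries_mul3 {x : ℤ} {A B C : Matrix (Fin 3) (Fin 3) ℤ}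
    (h : ∀ i j, x ∣ B i j) (i j : Fin 3) : x ∣ (A * B * C) i j := by
  rw [Matrix.mul_apply]
  refine Finset.dvd_sum fun k _ => ?_
  refine Dvd.dvd.mul_right ?_ _
  rw [Matrix.mul_apply]
  exact Finset.dvd_sum fun l _ => (h l k).mul_left _

theorem exists_SNF (M : Matrix (Fin 3) (Fin 3) ℤ) (hdet : M.det ≠ 0) :
    ∃ (P Q : Matrix (Fin 3) (Fin 3) ℤ) (t : Fin 3 → ℤ), IsUnit P.det ∧ IsUnit Q.det ∧
      P * M * Q = Matrix.diagonal t ∧ t 0 ∣ t 1 ∧ t 1 ∣ t 2 ∧ ∀ i, 0 ≤ t i := by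
  obtain ⟨P, Q, s, hP, hQ, h⟩ := exists_diag M hdet
  have hsprod : s 0 * s 1 * s 2 ≠ 0 := by
    have hdd : (Matrix.diagonal s).det = s 0 * s 1 * s 2 := by
      rw [Matrix.det_diagonal, Fin.prod_univ_three]
    rw [← h] at hdd
    simp only [Matrix.det_mul] at hdd
    rw [← hdd]
    exact mul_ne_zero (mul_ne_zero (hP.ne_zero) hdet) (hQ.ne_zero)
  have hs0 : s 0 ≠ 0 := fun h0 => hsprod (by rw [h0]; ring)
  have hs1 : s 1 ≠ 0 := fun h0 => hsprod (by rw [h0]; ring)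
  have hs2 : s 2 ≠ 0 := fun h0 => hsprod (by rw [h0]; ring)
  have hsvec : s = ![s 0, s 1, s 2] := by
    funext i; fin_cases i <;> rfl
  obtain ⟨P', Q', t, hP', hQ', hE, h01, h12⟩ := exists_chain (s 0) (s 1) (s 2) hs0 hs1 hs2
  rw [← hsvec] at hE
  have hcomb : (P' * P) * M * (Q * Q') = Matrix.diagonal t := comp_step h hE
  -- sign normalization
  let ε : Fin 3 → ℤ := fun i => if t i < 0 then -1 else 1
  have hεt : ∀ i, ε i * t i = |t i| := by
    intro i
    by_cases hti : t i < 0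
    · simp [ε, hti, abs_of_neg hti]
    · simp [ε, hti, abs_of_nonneg (not_lt.mp hti)]
  refine ⟨Matrix.diagonal ε * (P' * P), Q * Q', fun i => |t i|, ?_, ?_, ?_, ?_, ?_, fun i => abs_nonneg _⟩
  · simp only [Matrix.det_mul]
    refine IsUnit.mul ?_ (hP'.mul hP)
    rw [Matrix.det_diagonal, Fin.prod_univ_three]
    by_cases h0 : t 0 < 0 <;> by_cases h1 : t 1 < 0 <;> by_cases h2 : t 2 < 0 <;>
      simp [ε, h0, h1, h2, Int.isUnit_iff]
  · rw [Matrix.det_mul]; exact hQ.mul hQ'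
  · rw [Matrix.mul_assoc, Matrix.mul_assoc, ← Matrix.mul_assoc (P' * P), hcomb,
      Matrix.diagonal_mul_diagonal]
    rw [show (fun i => ε i * t i) = fun i => |t i| from funext hεt]
  · exact (abs_dvd_abs _ _).mpr h01
  · exact (abs_dvd_abs _ _).mpr h12

/-- The invariant factors of `[[2b, c, a],[c, 2d, 0],[a, 0, 0]]` are
`g₁ = gcd(a,2b,c,2d)`, `g₂ = gcd(a²,ac,2ad,4bd−c²)/g₁`, `g₃ = 2a²d/(g₁g₂)`;
in particular `g₁g₂g₃ = |det| = 2a²d`, and the quotient group (discriminant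
group of the corresponding lattice) is `ℤ/g₁ ⊕ ℤ/g₂ ⊕ ℤ/g₃`. -/
theorem stmt11 (a b c d : ℤ) (ha : 0 < a) (hd : 0 < d)
    (M : Matrix (Fin 3) (Fin 3) ℤ) (hM : M = !![2*b, c, a; c, 2*d, 0; a, 0, 0])
    (g₁ g₂ g₃ : ℕ)
    (hg₁ : g₁ = Int.gcd a (Int.gcd (2*b) (Int.gcd c (2*d))))
    (hg₂ : g₂ = Int.gcd (a^2) (Int.gcd (a*c) (Int.gcd (2*a*d) (4*b*d - c^2))) / g₁)
    (hg₃ : g₃ = (2*a^2*d).toNat / (g₁ * g₂)) :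
    ((g₁ * g₂ * g₃ : ℕ) : ℤ) = |M.det| ∧ |M.det| = 2*a^2*d ∧
    g₁ ∣ g₂ ∧ g₂ ∣ g₃ ∧
    (∃ P Q : Matrix (Fin 3) (Fin 3) ℤ, IsUnit P.det ∧ IsUnit Q.det ∧
      P * M * Q = Matrix.diagonal ![(g₁ : ℤ), (g₂ : ℤ), (g₃ : ℤ)]) ∧
    Nonempty (((Fin 3 → ℤ) ⧸ LinearMap.range (Matrix.toLin' M)) ≃+
      (ZMod g₁ × ZMod g₂ × ZMod g₃)) := by
  have hpos : (0:ℤ) < 2*a^2*d := by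
    have := mul_pos (mul_pos (by norm_num : (0:ℤ) < 2) (pow_pos ha 2)) hd
    linarith
  have hdet : M.det = -(2*a^2*d) := by
    rw [hM, Matrix.det_fin_three]
    norm_num [Matrix.vecHead, Matrix.vecTail, Matrix.cons_val_two]
    ring
  have hdet0 : M.det ≠ 0 := by rw [hdet]; exact neg_ne_zero.mpr hpos.ne'
  obtain ⟨P, Q, t, hP, hQ, hPMQ, h01, h12, hnn⟩ := exists_SNF M hdet0
  -- g₁ divides all entries of M
  have d1a : (g₁:ℤ) ∣ a := hg₁ ▸ (Int.gcd_dvd_left _ _)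
  have d1rest : (g₁:ℤ) ∣ (Int.gcd (2*b) (Int.gcd c (2*d)) : ℤ) := hg₁ ▸ (Int.gcd_dvd_right _ _)
  have d1b : (g₁:ℤ) ∣ 2*b := d1rest.trans (Int.gcd_dvd_left _ _)
  have d1cd : (g₁:ℤ) ∣ (Int.gcd c (2*d) : ℤ) := d1rest.trans (Int.gcd_dvd_right _ _)
  have d1c : (g₁:ℤ) ∣ c := d1cd.trans (Int.gcd_dvd_left _ _)
  have d1d : (g₁:ℤ) ∣ 2*d := d1cd.trans (Int.gcd_dvd_right _ _)
  have hMent : ∀ i j, (g₁:ℤ) ∣ M i j := by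
    intro i j
    rw [hM]
    fin_cases i <;> fin_cases j <;>
      simp only [Matrix.cons_val', Matrix.cons_val_zero, Matrix.cons_val_one, Matrix.head_cons,
        Matrix.empty_val', Matrix.cons_val_fin_one, Matrix.head_fin_const, Matrix.of_apply,
        Fin.isValue, Matrix.cons_val_two, Matrix.tail_cons] <;>
      first
        | exact d1a | exact d1b | exact d1c | exact d1d | exact dvd_zero _
  -- (g₁ : ℤ) ∣ t 0
  have hg1t0 : (g₁:ℤ) ∣ t 0 := by
    have h := dvd_entries_mul3 hMent (A := P) (C := Q) 0 0
    rwa [hPMQ, Matrix.diagonal_apply_eq] at h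
  -- t 0 divides g₁
  haveI iP := P.invertibleOfIsUnitDet hP
  haveI iQ := Q.invertibleOfIsUnitDet hQ
  have hMeq : ⅟P * Matrix.diagonal t * ⅟Q = M := by
    rw [← hPMQ]
    have h : ⅟P * (P * M * Q) * ⅟Q = (⅟P * P) * M * (Q * ⅟Q) := by
      simp only [Matrix.mul_assoc]
    rw [h, invOf_mul_self, mul_invOf_self, Matrix.one_mul, Matrix.mul_one]
  have hDent : ∀ i j, t 0 ∣ Matrix.diagonal t i j := by
    intro i j
    by_cases hij : i = j
    · subst hij
      rw [Matrix.diagonal_apply_eq]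
      fin_cases i
      · exact dvd_rfl
      · exact h01
      · exact h01.trans h12
    · rw [Matrix.diagonal_apply_ne _ hij]; exact dvd_zero _
  have ht0Ment : ∀ i j, t 0 ∣ M i j := by
    intro i j
    have h := dvd_entries_mul3 hDent (A := ⅟P) (C := ⅟Q) i j
    rwa [hMeq] at h
  have ht0g1 : t 0 ∣ (g₁:ℤ) := by
    rw [hg₁]
    refine Int.dvd_coe_gcd ?_ (Int.dvd_coe_gcd ?_ (Int.dvd_coe_gcd ?_ ?_))
    · have := ht0Ment 0 2; rw [hM] at this; simpa using this
    · have := ht0Ment 0 0; rw [hM] at this; simpa using this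
    · have := ht0Ment 0 1; rw [hM] at this; simpa using this
    · have := ht0Ment 1 1; rw [hM] at this; simpa using this
  have ht0 : t 0 = (g₁:ℤ) := Int.dvd_antisymm (hnn 0) (Int.natCast_nonneg _) ht0g1 hg1t0
  -- adjugate computations
  have hadjM : M.adjugate = !![0, 0, -(2*a*d); 0, -(a^2), a*c; -(2*a*d), a*c, 4*b*d - c^2] := by
    rw [hM, Matrix.adjugate_fin_three_of]
    ext i j
    fin_cases i <;> fin_cases j <;>
      simp [Matrix.vecHead, Matrix.vecTail] <;> ring
  have htvec : t = ![t 0, t 1, t 2] := by funext i; fin_cases i <;> rfl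
  have hadjD : (Matrix.diagonal t).adjugate
      = Matrix.diagonal ![t 1 * t 2, t 0 * t 2, t 0 * t 1] := by
    rw [htvec, diag3, Matrix.adjugate_fin_three_of, diag3]
    ext i j
    fin_cases i <;> fin_cases j <;>
      simp [Matrix.vecHead, Matrix.vecTail] <;> ring
  have e1 : Q.adjugate * M.adjugate * P.adjugate
      = Matrix.diagonal ![t 1 * t 2, t 0 * t 2, t 0 * t 1] := by
    rw [← hadjD, ← hPMQ, Matrix.adjugate_mul_distrib, Matrix.adjugate_mul_distrib,
      Matrix.mul_assoc]
  have e2 : (⅟Q).adjugate * Matrix.diagonal ![t 1 * t 2, t 0 * t 2, t 0 * t 1] * (⅟P).adjugate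
      = M.adjugate := by
    rw [← hadjD, ← hMeq, Matrix.adjugate_mul_distrib, Matrix.adjugate_mul_distrib,
      Matrix.mul_assoc]
  set G2 : ℕ := Int.gcd (a^2) (Int.gcd (a*c) (Int.gcd (2*a*d) (4*b*d - c^2))) with hG2
  have d2a : (G2:ℤ) ∣ a^2 := hG2 ▸ (Int.gcd_dvd_left _ _)
  have d2rest : (G2:ℤ) ∣ (Int.gcd (a*c) (Int.gcd (2*a*d) (4*b*d - c^2)) : ℤ) :=
    hG2 ▸ (Int.gcd_dvd_right _ _)
  have d2b : (G2:ℤ) ∣ a*c := d2rest.trans (Int.gcd_dvd_left _ _)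
  have d2cd : (G2:ℤ) ∣ (Int.gcd (2*a*d) (4*b*d - c^2) : ℤ) := d2rest.trans (Int.gcd_dvd_right _ _)
  have d2c : (G2:ℤ) ∣ 2*a*d := d2cd.trans (Int.gcd_dvd_left _ _)
  have d2d : (G2:ℤ) ∣ 4*b*d - c^2 := d2cd.trans (Int.gcd_dvd_right _ _)
  have hadjMent : ∀ i j, (G2:ℤ) ∣ M.adjugate i j := by
    intro i j
    rw [hadjM]
    fin_cases i <;> fin_cases j <;>
      simp only [Matrix.cons_val', Matrix.cons_val_zero, Matrix.cons_val_one, Matrix.head_cons,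
        Matrix.empty_val', Matrix.cons_val_fin_one, Matrix.head_fin_const, Matrix.of_apply,
        Fin.isValue, Matrix.cons_val_two, Matrix.tail_cons] <;>
      first
        | exact dvd_zero _
        | exact d2a.neg_right
        | exact d2b
        | (exact dvd_neg.mpr (by first | exact d2a | exact d2c))
        | exact d2c
        | exact d2d
        | (rw [show 2*a*d = a*(2*d) by ring]; exact d2c)
  have hG2t01 : (G2:ℤ) ∣ t 0 * t 1 := by
    have h := dvd_entries_mul3 hadjMent (A := Q.adjugate) (C := P.adjugate) 2 2
    rw [e1, Matrix.diagonal_apply_eq] at h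
    simpa using h
  have hDadjent : ∀ i j, t 0 * t 1 ∣ Matrix.diagonal ![t 1 * t 2, t 0 * t 2, t 0 * t 1] i j := by
    intro i j
    by_cases hij : i = j
    · subst hij
      rw [Matrix.diagonal_apply_eq]
      fin_cases i
      · show t 0 * t 1 ∣ t 1 * t 2
        rw [mul_comm (t 1) (t 2)]
        exact mul_dvd_mul (h01.trans h12) dvd_rfl
      · exact mul_dvd_mul_left _ h12
      · exact dvd_rfl
    · rw [Matrix.diagonal_apply_ne _ hij]; exact dvd_zero _
  have ht01adjM : ∀ i j, t 0 * t 1 ∣ M.adjugate i j := by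
    intro i j
    have h := dvd_entries_mul3 hDadjent (A := (⅟Q).adjugate) (C := (⅟P).adjugate) i j
    rwa [e2] at h
  have ht01G2 : t 0 * t 1 ∣ (G2:ℤ) := by
    rw [hG2]
    refine Int.dvd_coe_gcd ?_ (Int.dvd_coe_gcd ?_ (Int.dvd_coe_gcd ?_ ?_))
    · have h := ht01adjM 1 1; rw [hadjM] at h; simp only [Matrix.cons_val_one,
        Matrix.head_cons, Matrix.cons_val', Matrix.empty_val', Matrix.cons_val_fin_one,
        Matrix.cons_val_zero, Matrix.of_apply, Matrix.head_fin_const] at h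
      exact (dvd_neg.mp h)
    · have h := ht01adjM 1 2; rw [hadjM] at h
      simpa using h
    · have h := ht01adjM 0 2; rw [hadjM] at h
      simp only [Matrix.cons_val', Matrix.cons_val_zero, Matrix.cons_val_one, Matrix.head_cons,
        Matrix.empty_val', Matrix.cons_val_fin_one, Matrix.of_apply, Fin.isValue,
        Matrix.cons_val_two, Matrix.tail_cons, Matrix.head_fin_const] at h
      exact dvd_neg.mp h
    · have h := ht01adjM 2 2; rw [hadjM] at h
      simpa using h
  have ht01 : t 0 * t 1 = (G2:ℤ) :=
    Int.dvd_antisymm (mul_nonneg (hnn 0) (hnn 1)) (Int.natCast_nonneg _) ht01G2 hG2t01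
  -- determinant identity
  have hdet3 : t 0 * t 1 * t 2 = 2*a^2*d := by
    have hD : (Matrix.diagonal t).det = t 0 * t 1 * t 2 := by
      rw [Matrix.det_diagonal, Fin.prod_univ_three]
    rw [← hPMQ] at hD
    simp only [Matrix.det_mul] at hD
    have hprodnn : 0 ≤ t 0 * t 1 * t 2 := mul_nonneg (mul_nonneg (hnn 0) (hnn 1)) (hnn 2)
    rcases Int.isUnit_iff.mp hP with hP1 | hP1 <;> rcases Int.isUnit_iff.mp hQ with hQ1 | hQ1 <;>
      rw [hP1, hQ1, hdet] at hD <;> linarith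
  -- g₁ ≠ 0
  have hg1ne : g₁ ≠ 0 := by
    rw [hg₁]
    intro h
    exact ha.ne' (Int.gcd_eq_zero_iff.mp h).1
  -- t 1 = g₂
  obtain ⟨n1, hn1⟩ : ∃ n : ℕ, t 1 = (n:ℤ) := ⟨(t 1).toNat, (Int.toNat_of_nonneg (hnn 1)).symm⟩
  have hmulnat : g₁ * n1 = G2 := by
    have : ((g₁ * n1 : ℕ):ℤ) = (G2:ℤ) := by push_cast; rw [← ht0, ← hn1]; exact ht01
    exact_mod_cast this
  have ht1 : t 1 = (g₂:ℤ) := by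
    rw [hn1, hg₂, ← hmulnat, Nat.mul_div_cancel_left _ (Nat.pos_of_ne_zero hg1ne)]
  -- t 2 = g₃
  have hg2ne : g₂ ≠ 0 := by
    intro h
    have h0 : t 1 = 0 := by rw [ht1, h]; simp
    rw [h0, mul_zero, zero_mul] at hdet3
    linarith
  obtain ⟨n2, hn2⟩ : ∃ n : ℕ, t 2 = (n:ℤ) := ⟨(t 2).toNat, (Int.toNat_of_nonneg (hnn 2)).symm⟩
  have hmulnat3 : (g₁ * g₂) * n2 = (2*a^2*d).toNat := by
    have h : ((g₁ * g₂ * n2 : ℕ):ℤ) = 2*a^2*d := by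
      push_cast
      rw [← ht0, ← ht1, ← hn2]
      exact hdet3
    have h2 := congrArg Int.toNat h
    rw [Int.toNat_natCast] at h2; exact h2
  have ht2 : t 2 = (g₃:ℤ) := by
    rw [hn2, hg₃, ← hmulnat3,
      Nat.mul_div_cancel_left _ (Nat.pos_of_ne_zero (Nat.mul_ne_zero hg1ne hg2ne))]
  -- assemble first four conjuncts
  have habs : |M.det| = 2*a^2*d := by
    rw [hdet, abs_neg, abs_of_pos hpos]
  have hdiagfinal : Matrix.diagonal t = Matrix.diagonal ![(g₁:ℤ), (g₂:ℤ), (g₃:ℤ)] := by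
    have hteq : t = ![(g₁:ℤ), (g₂:ℤ), (g₃:ℤ)] := by
      funext i
      fin_cases i
      · simpa using ht0
      · simpa using ht1
      · simpa using ht2
    rw [hteq]
  refine ⟨?_, habs, ?_, ?_, ⟨P, Q, hP, hQ, by rw [hPMQ, hdiagfinal]⟩, ?_⟩
  · rw [habs, ← hdet3, ht0, ht1, ht2]
    push_cast
    ring
  · exact_mod_cast Int.natCast_dvd_natCast.mp (by rw [← ht0, ← ht1]; exact h01)
  · exact_mod_cast Int.natCast_dvd_natCast.mp (by rw [← ht1, ← ht2]; exact h12)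
  · -- the quotient group
    set v : Fin 3 → ℤ := ![(g₁:ℤ), (g₂:ℤ), (g₃:ℤ)] with hv
    have hPMQ2 : P * M * Q = Matrix.diagonal v := by rw [hPMQ, hdiagfinal]
    let eP : (Fin 3 → ℤ) ≃ₗ[ℤ] (Fin 3 → ℤ) := P.toLinearEquiv' iP
    have hQsurj : LinearMap.range (Matrix.toLin' Q) = ⊤ :=
      LinearMap.range_eq_top.mpr (by
        have h := (Q.toLinearEquiv' iQ).surjective
        have hco : ⇑(Q.toLinearEquiv' iQ) = ⇑(Matrix.toLin' Q) := by
          ext x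
          rfl
        rwa [hco] at h)
    have hrange : (LinearMap.range (Matrix.toLin' M)).map (eP : (Fin 3 → ℤ) →ₗ[ℤ] (Fin 3 → ℤ))
        = LinearMap.range (Matrix.toLin' (Matrix.diagonal v)) := by
      rw [← hPMQ2, Matrix.toLin'_mul, Matrix.toLin'_mul]
      rw [LinearMap.range_comp_of_range_eq_top _ hQsurj, LinearMap.range_comp]
      congr 1
    have hrange2 : LinearMap.range (Matrix.toLin' (Matrix.diagonal v))
        = Submodule.pi Set.univ (fun i => Ideal.span {v i}) := by
      ext x
      simp only [LinearMap.mem_range, Submodule.mem_pi, Set.mem_univ, forall_true_left,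
        Ideal.mem_span_singleton]
      constructor
      · rintro ⟨y, rfl⟩ i
        rw [Matrix.toLin'_apply, Matrix.mulVec_diagonal]
        exact Dvd.intro _ rfl
      · intro h
        choose y hy using fun i => (h i)
        refine ⟨y, ?_⟩
        funext i
        rw [Matrix.toLin'_apply, Matrix.mulVec_diagonal, ← hy i]
    let eq1 : ((Fin 3 → ℤ) ⧸ LinearMap.range (Matrix.toLin' M)) ≃ₗ[ℤ]
        ((Fin 3 → ℤ) ⧸ Submodule.pi Set.univ (fun i => Ideal.span {v i})) :=
      Submodule.Quotient.equiv _ _ eP (hrange.trans hrange2)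
    let eq2 := Submodule.quotientPi (fun i : Fin 3 => Ideal.span {v i})
    let eq3 : (∀ i : Fin 3, ℤ ⧸ Ideal.span {v i}) ≃+
        ((ℤ ⧸ Ideal.span {v 0}) × (ℤ ⧸ Ideal.span {v 1}) × (ℤ ⧸ Ideal.span {v 2})) :=
      { toFun := fun x => (x 0, x 1, x 2)
        invFun := fun x => Fin.cons x.1 (Fin.cons x.2.1 (Fin.cons x.2.2 finZeroElim))
        left_inv := by
          intro x
          funext i
          fin_cases i <;> rfl
        right_inv := fun x => rfl
        map_add' := fun x y => rfl }
    let c0 : (ℤ ⧸ Ideal.span {v 0}) ≃+ ZMod g₁ := (Int.quotientSpanEquivZMod (v 0)).toAddEquiv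
    let c1 : (ℤ ⧸ Ideal.span {v 1}) ≃+ ZMod g₂ := (Int.quotientSpanEquivZMod (v 1)).toAddEquiv
    let c2 : (ℤ ⧸ Ideal.span {v 2}) ≃+ ZMod g₃ := (Int.quotientSpanEquivZMod (v 2)).toAddEquiv
    exact ⟨eq1.toAddEquiv.trans (eq2.toAddEquiv.trans (eq3.trans
      (AddEquiv.prodCongr c0 (AddEquiv.prodCongr c1 c2))))⟩
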